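/- Let Δ be a facet of a d-simplex Δ' ⊂ R^d contained in a convex set P, with supporting hyperplane H of Δ' satisfying H ∩ Δ' = Δ. If some point x ∈ P lies strictly on the other side of H from Δ', then every point in the relative interior of Δ is an interior point of P. -/

import Mathlib

open Set Filter Topology

/-- An affine functional along a line segment extension. -/
private lemma affine_line_eval {V : Type*} [NormedAddCommGroup V] [NormedSpace ℝ V]
    (g : V →ᵃ[ℝ] ℝ) (y w : V) (δ : ℝ) :
    g (y + δ • (y - w)) = g y + δ * (g y - g w) := by
  have h : y + δ • (y - w) = δ • (y -ᵥ w) +ᵥ y := by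
    simp only [vsub_eq_sub, vadd_eq_add]; abel
  rw [h, AffineMap.map_vadd, g.linear.map_smul, AffineMap.linearMap_vsub]
  simp only [vsub_eq_sub, vadd_eq_add, smul_eq_mul]; ring

/-- A relative interior point of a set can be pushed slightly beyond, away from any
point of the set, while staying in the set. -/
private lemma exists_extend {V : Type*} [NormedAddCommGroup V] [NormedSpace ℝ V]
    {s : Set V} {y w : V} (hy : y ∈ intrinsicInterior ℝ s) (hw : w ∈ s) :
    ∃ δ : ℝ, 0 < δ ∧ y + δ • (y - w) ∈ s := by
  rw [mem_intrinsicInterior] at hy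
  obtain ⟨z, hz, hzy⟩ := hy
  obtain ⟨U, hUopen, hU⟩ := isOpen_induced_iff.mp (isOpen_interior
    (s := ((↑) ⁻¹' s : Set (affineSpan ℝ s))))
  have hyU : y ∈ U := by
    have := hz
    rw [← hU] at this
    simpa [hzy] using this
  have hcont : ContinuousAt (fun δ : ℝ => y + δ • (y - w)) 0 := by fun_prop
  have h0 : (fun δ : ℝ => y + δ • (y - w)) 0 = y := by simp
  have hev : ∀ᶠ δ in 𝓝 (0:ℝ), y + δ • (y - w) ∈ U := by
    apply hcont.eventually_mem
    simpa using hUopen.mem_nhds hyU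
  obtain ⟨δ, hδU, hδpos⟩ := ((hev.filter_mono nhdsWithin_le_nhds).and
    (eventually_mem_nhdsWithin (s := Ioi (0:ℝ)))).exists
  refine ⟨δ, hδpos, ?_⟩
  have hymem : y ∈ affineSpan ℝ s := by
    rw [← hzy]; exact z.2
  have hwmem : w ∈ affineSpan ℝ s := subset_affineSpan ℝ s hw
  have hmem : y + δ • (y - w) ∈ affineSpan ℝ s := by
    have := AffineSubspace.smul_vsub_vadd_mem (affineSpan ℝ s) δ hymem hwmem hymem
    simpa [vsub_eq_sub, vadd_eq_add, add_comm] using this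
  have : (⟨y + δ • (y - w), hmem⟩ : affineSpan ℝ s) ∈ interior ((↑) ⁻¹' s : Set (affineSpan ℝ s)) := by
    rw [← hU]; exact hδU
  have h2 := interior_subset this
  exact h2

theorem stmt8 {d : ℕ} (P : Set (EuclideanSpace ℝ (Fin d))) (hP : Convex ℝ P)
    (x' : Fin (d + 1) → EuclideanSpace ℝ (Fin d)) (hindep : AffineIndependent ℝ x')
    (hsub : convexHull ℝ (Set.range x') ⊆ P)
    (f : EuclideanSpace ℝ (Fin d) →ₗ[ℝ] ℝ) (c : ℝ) (hf : f ≠ 0) (i : Fin (d + 1))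
    (hpos : ∀ y ∈ convexHull ℝ (Set.range x'), c ≤ f y)
    (hface : {y ∈ convexHull ℝ (Set.range x') | f y = c} = convexHull ℝ (x' '' {j | j ≠ i}))
    (x : EuclideanSpace ℝ (Fin d)) (hx : x ∈ P) (hxneg : f x < c) :
    ∀ y ∈ intrinsicInterior ℝ (convexHull ℝ (x' '' {j | j ≠ i})), y ∈ interior P := by
  intro y hy
  -- set up the affine basis
  have htop : affineSpan ℝ (Set.range x') = ⊤ := by
    rw [hindep.affineSpan_eq_top_iff_card_eq_finrank_add_one]
    simp
  let b : AffineBasis (Fin (d + 1)) ℝ (EuclideanSpace ℝ (Fin d)) := ⟨x', hindep, htop⟩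
  have hb : ⇑b = x' := rfl
  -- basic facts about f on vertices
  have hfc : ∀ j, j ≠ i → f (x' j) = c := by
    intro j hj
    have h1 : x' j ∈ convexHull ℝ (x' '' {j | j ≠ i}) :=
      subset_convexHull ℝ _ ⟨j, hj, rfl⟩
    rw [← hface] at h1
    exact h1.2
  have hfi : c < f (x' i) := by
    have h1 : x' i ∈ convexHull ℝ (Set.range x') := subset_convexHull ℝ _ ⟨i, rfl⟩
    rcases lt_or_eq_of_le (hpos _ h1) with h | h
    · exact h
    · exfalso
      have h2 : x' i ∈ convexHull ℝ (x' '' {j | j ≠ i}) := by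
        rw [← hface]; exact ⟨h1, h.symm⟩
      have h3 : x' i ∈ affineSpan ℝ (x' '' {j | j ≠ i}) :=
        convexHull_subset_affineSpan _ h2
      have h4 : ({j | j ≠ i} : Set (Fin (d+1))) = Set.univ \ {i} := by
        ext j; simp [Set.mem_diff]
      rw [h4] at h3
      exact hindep.notMem_affineSpan_diff i Set.univ h3
  -- coordinates are nonnegative on the simplex
  have hnonneg : ∀ j, ∀ z ∈ convexHull ℝ (Set.range x'), 0 ≤ b.coord j z := by
    intro j
    have hconv : Convex ℝ {z | 0 ≤ b.coord j z} := by
      have := (convex_Ici (0:ℝ)).affine_preimage (b.coord j)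
      simpa [Set.preimage, Set.mem_Ici] using this
    intro z hz
    refine  convexHull_min ?_ hconv hz
    rintro _ ⟨k, rfl⟩
    rcases eq_or_ne j k with rfl | hk
    · simp [← hb, b.coord_apply_eq]
    · simp [← hb, b.coord_apply_ne hk]
  have hΔsub : convexHull ℝ (x' '' {j | j ≠ i}) ⊆ convexHull ℝ (Set.range x') :=
    convexHull_mono (Set.image_subset_range _ _)
  have hyΔ : y ∈ convexHull ℝ (x' '' {j | j ≠ i}) := intrinsicInterior_subset hy
  -- coord i y = 0
  have hy0 : b.coord i y = 0 := by
    have hconv : Convex ℝ {z | b.coord i z = 0} := by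
      have := (convex_singleton (0:ℝ)).affine_preimage (b.coord i)
      simpa [Set.preimage] using this
    have : y ∈ {z | b.coord i z = 0} := by
      refine convexHull_min ?_ hconv hyΔ
      rintro _ ⟨j, hj, rfl⟩
      simpa [← hb] using b.coord_apply_ne (Ne.symm hj)
    exact this
  -- coord j y > 0 for j ≠ i
  have hypos : ∀ j, j ≠ i → 0 < b.coord j y := by
    intro j hj
    by_contra hle
    push_neg at hle
    have hy0' : b.coord j y = 0 := le_antisymm hle (hnonneg j y (hΔsub hyΔ))
    have hwΔ : x' j ∈ convexHull ℝ (x' '' {j | j ≠ i}) := subset_convexHull ℝ _ ⟨j, hj, rfl⟩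
    obtain ⟨δ, hδpos, hδmem⟩ := exists_extend hy hwΔ
    have hnn := hnonneg j _ (hΔsub hδmem)
    rw [affine_line_eval (b.coord j) y (x' j) δ, hy0'] at hnn
    have : b.coord j (x' j) = 1 := by simpa [← hb] using b.coord_apply_eq j
    rw [this] at hnn
    nlinarith
  -- coord i x < 0
  have hxi : b.coord i x < 0 := by
    have hsum : ∑ j, b.coord j x = 1 := b.sum_coord_apply_eq_one x
    have hcomb : ∑ j, b.coord j x • x' j = x := by
      simpa [← hb] using b.linear_combination_coord_eq_self x
    have hfx : f x = ∑ j, b.coord j x * f (x' j) := by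
      conv_lhs => rw [← hcomb]
      rw [map_sum]
      simp [f.map_smul]
    rw [Finset.sum_eq_sum_sdiff_singleton_add (Finset.mem_univ i)] at hfx
    have hrest : ∑ j ∈ Finset.univ \ {i}, b.coord j x * f (x' j)
        = (1 - b.coord i x) * c := by
      rw [Finset.sum_congr rfl (fun j hjm => by
        rw [hfc j (by simpa using (Finset.mem_sdiff.mp hjm).2)])]
      rw [← Finset.sum_mul]
      congr 1
      have := Finset.sum_eq_sum_sdiff_singleton_add (Finset.mem_univ i) (fun j => b.coord j x)
      rw [this] at hsum
      linarith
    rw [hrest] at hfx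
    nlinarith
  -- choose ε
  have key : ∃ ε : ℝ, 0 < ε ∧ ∀ j, j ≠ i →
      0 < b.coord j y + ε * (b.coord j y - b.coord j x) := by
    have h1 : ∀ᶠ ε : ℝ in 𝓝[>] 0, ∀ j, j ≠ i →
        0 < b.coord j y + ε * (b.coord j y - b.coord j x) := by
      rw [eventually_all]
      intro j
      rcases eq_or_ne j i with rfl | hj
      · exact Eventually.of_forall fun _ h => absurd rfl h
      · have hc : ContinuousAt (fun ε : ℝ =>
            b.coord j y + ε * (b.coord j y - b.coord j x)) 0 := by fun_prop
        have h0 : (0:ℝ) < b.coord j y + 0 * (b.coord j y - b.coord j x) := by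
          simpa using hypos j hj
        have := hc.eventually (p := fun t => 0 < t) ((isOpen_lt continuous_const continuous_id).eventually_mem h0)
        exact (this.filter_mono nhdsWithin_le_nhds).mono fun ε hε _ => hε
    obtain ⟨ε, hε1, hε2⟩ := (h1.and (eventually_mem_nhdsWithin (s := Ioi (0:ℝ)))).exists
    exact ⟨ε, hε2, hε1⟩
  obtain ⟨ε, hεpos, hεcoord⟩ := key
  set z := y + ε • (y - x) with hz
  have hzcoord : ∀ j, 0 < b.coord j z := by
    intro j
    rw [hz, affine_line_eval (b.coord j) y x ε]
    rcases eq_or_ne j i with rfl | hj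
    · rw [hy0]
      nlinarith
    · exact hεcoord j hj
  have hzint : z ∈ interior (convexHull ℝ (Set.range x')) := by
    rw [← hb, b.interior_convexHull]
    exact hzcoord
  have hzP : z ∈ interior P := interior_mono hsub hzint
  have hcombo : (1 / (1 + ε)) • z + (ε / (1 + ε)) • x = y := by
    rw [hz]
    have h1ε : (1:ℝ) + ε ≠ 0 := by positivity
    match_scalars <;> field_simp <;> ring
  rw [← hcombo]
  exact hP.combo_interior_self_mem_interior hzP hx (by positivity) (by positivity)
    (by field_simp)
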